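/- arXiv:2305.01354 — 4 statements merged into one kernel-verified Lean document; each statement's English description precedes it below -/
import Mathlib

section
/- (Harnack inequality) Let b be a connected graph over X and c a potential such that H = H_{b,c} is R-invariant for a subgroup R of a group G acting on X. Then for all x, y ∈ X there exists a constant C_{x,y} > 0 such that T_g f(x) ≥ C_{x,y} · T_g f(y) holds for every nonnegative, not identically zero, superharmonic function f and every g ∈ R. -/
open MeasureTheory
open scoped BigOperators

noncomputable section

namespace GraphPaper

variable {X : Type*}

/-- The Schrödinger operator `H_{b,c}` of a graph `(b,c)` over `X`. -/
def schrodinger (b : X → X → ℝ) (c : X → ℝ) (f : X → ℝ) : X → ℝ :=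
  fun x => (∑' y, b x y * (f x - f y)) + c x * f x

/-- Membership of `f` in the domain of `H_{b,c}`. -/
def InDom (b : X → X → ℝ) (f : X → ℝ) : Prop :=
  ∀ x, Summable fun y => b x y * |f y|

/-- The graph `b` is connected: any two points are joined by a path of positive weights. -/
def Connected (b : X → X → ℝ) : Prop :=
  ∀ x y : X, Relation.ReflTransGen (fun u v => 0 < b u v) x y

/-- The degree `deg(x) = ∑_y b(x,y) + c(x)`. -/
def deg (b : X → X → ℝ) (c : X → ℝ) (x : X) : ℝ :=
  (∑' y, b x y) + c x

variable {G : Type*} [Group G] [MulAction G X]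

/-- The shift `T_g f (x) = f (g⁻¹ x)`. -/
def shift (g : G) (f : X → ℝ) : X → ℝ := fun x => f (g⁻¹ • x)

/-- `H_{b,c}` is invariant under the shifts by elements of a set `R ⊆ G`. -/
def HInvOn (b : X → X → ℝ) (c : X → ℝ) (R : Set G) : Prop :=
  ∀ g ∈ R, ∀ f : X → ℝ, InDom b f →
    InDom b (shift g f) ∧ schrodinger b c (shift g f) = shift g (schrodinger b c f)

/-- The action of `G` on `X` is cocompact: there is a finite `V` with `G V = X`. -/
def CocompactAction (G X : Type*) [Group G] [MulAction G X] : Prop :=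
  ∃ V : Finset X, ∀ x : X, ∃ g : G, ∃ v ∈ V, x = g • v

/-- The set `𝓗⁺` of nonnegative, not identically zero, harmonic functions. -/
def Hplus (b : X → X → ℝ) (c : X → ℝ) : Set (X → ℝ) :=
  {f | InDom b f ∧ schrodinger b c f = 0 ∧ (∀ x, 0 ≤ f x) ∧ f ≠ 0}

/-- The set `𝓚`: the closure of the normalized positive harmonic functions. -/
def Kset (b : X → X → ℝ) (c : X → ℝ) (x₀ : X) : Set (X → ℝ) :=
  closure {f : X → ℝ | f ∈ Hplus b c ∧ f x₀ = 1}

/-- The set `𝓚^R` of `R`-invariant elements of `𝓚`. -/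
def KsetR (b : X → X → ℝ) (c : X → ℝ) (x₀ : X) (R : Set G) : Set (X → ℝ) :=
  {f ∈ Kset b c x₀ | ∀ g ∈ R, shift g f = f}

/-- `f` is `G`-multiplicative with a character `γ ∈ Hom(G, ℝ_{>0})`. -/
def IsMultiplicative (G : Type*) [Group G] [MulAction G X] (f : X → ℝ) : Prop :=
  ∃ γ : G →* ℝ, (∀ g, 0 < γ g) ∧ ∀ g : G, shift g f = γ g⁻¹ • f

/-- `Q(R) = π⁻¹(Z(G/R))`, the preimage of the centre of `G/R`. -/
def Qsub (R : Subgroup G) [R.Normal] : Subgroup G :=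
  (Subgroup.center (G ⧸ R)).comap (QuotientGroup.mk' R)

/-- The set `𝓜` of multiplicative elements of `𝓚`. -/
def Mset (G : Type*) [Group G] [MulAction G X] (b : X → X → ℝ) (c : X → ℝ) (x₀ : X) :
    Set (X → ℝ) :=
  {f ∈ Kset b c x₀ | IsMultiplicative G f}

/-- The set `𝓚_λ` for the graph `(b, c - λ)`, i.e. for `λ`-harmonic functions. -/
def KsetLam (b : X → X → ℝ) (c : X → ℝ) (x₀ : X) (l : ℝ) : Set (X → ℝ) :=
  closure {f : X → ℝ | InDom b f ∧ (schrodinger b c f = fun x => l * f x) ∧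
    (∀ x, 0 ≤ f x) ∧ f ≠ 0 ∧ f x₀ = 1}

/-- The set `𝓜_λ` of multiplicative elements of `𝓚_λ`. -/
def MsetLam (G : Type*) [Group G] [MulAction G X] (b : X → X → ℝ) (c : X → ℝ) (x₀ : X)
    (l : ℝ) : Set (X → ℝ) :=
  {f ∈ KsetLam b c x₀ l | IsMultiplicative G f}


lemma summable_bf (b : X → X → ℝ) {f : X → ℝ} (hf : InDom b f)
    (hfpos : ∀ z, 0 ≤ f z) (u : X) : Summable fun y => b u y * f y :=
  (hf u).congr fun y => by rw [abs_of_nonneg (hfpos y)]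

lemma key_ineq (b : X → X → ℝ) (c : X → ℝ) (hbs : ∀ x, Summable (b x))
    {f : X → ℝ} (hf : InDom b f) (hsup : ∀ z, 0 ≤ schrodinger b c f z)
    (hfpos : ∀ z, 0 ≤ f z) (u : X) :
    (∑' y, b u y * f y) ≤ deg b c u * f u := by
  have hS : Summable fun y => b u y * f y := summable_bf b hf hfpos u
  have hC : Summable fun y => b u y * f u := (hbs u).mul_right _
  have h := hsup u
  unfold schrodinger at h
  have hrw : (∑' y, b u y * (f u - f y)) = (∑' y, b u y) * f u - ∑' y, b u y * f y := by
    rw [← tsum_mul_right, ← Summable.tsum_sub hC hS]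
    congr 1; funext y; ring
  rw [hrw] at h
  have hd : deg b c u * f u = (∑' y, b u y) * f u + c u * f u := by
    unfold deg; ring
  linarith

lemma pos_of_superharmonic (b : X → X → ℝ) (c : X → ℝ)
    (hb0 : ∀ x y, 0 ≤ b x y) (hbs : ∀ x, Summable (b x)) (hconn : Connected b)
    {f : X → ℝ} (hf : InDom b f) (hsup : ∀ z, 0 ≤ schrodinger b c f z)
    (hfpos : ∀ z, 0 ≤ f z) (hne : f ≠ 0) : ∀ z, 0 < f z := by
  -- zero propagates along edges
  have hzero : ∀ u v, f u = 0 → 0 < b u v → f v = 0 := by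
    intro u v hu huv
    have hS : Summable fun y => b u y * f y := summable_bf b hf hfpos u
    have hk := key_ineq b c hbs hf hsup hfpos u
    rw [hu, mul_zero] at hk
    have h1 : b u v * f v ≤ ∑' y, b u y * f y :=
      Summable.le_tsum hS v fun y _ => mul_nonneg (hb0 u y) (hfpos y)
    have h2 : b u v * f v ≤ 0 := h1.trans hk
    have := mul_nonneg (hb0 u v) (hfpos v)
    have hbvf : b u v * f v = 0 := le_antisymm h2 this
    rcases mul_eq_zero.mp hbvf with h | h
    · exact absurd h (ne_of_gt huv)
    · exact h
  obtain ⟨w, hw⟩ := Function.ne_iff.mp hne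
  intro z
  rcases lt_or_eq_of_le (hfpos z) with h | h
  · exact h
  · exfalso
    apply hw
    have : ∀ {a b' : X}, Relation.ReflTransGen (fun u v => 0 < b u v) a b' → f a = 0 → f b' = 0 := by
      intro a b' hpath
      induction hpath with
      | refl => exact id
      | tail _ e ih => exact fun ha => hzero _ _ (ih ha) e
    exact this (hconn z w) h.symm

/-- **Harnack inequality.** -/
theorem harnack_inequality {X : Type*} [Countable X] {G : Type*} [Group G] [MulAction G X]
    (b : X → X → ℝ) (c : X → ℝ)
    (hb0 : ∀ x y, 0 ≤ b x y) (hbd : ∀ x, b x x = 0) (hbs : ∀ x, Summable (b x))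
    (hconn : Connected b) (R : Subgroup G) (hH : HInvOn b c (R : Set G)) :
    ∀ x y : X, ∃ C : ℝ, 0 < C ∧ ∀ f : X → ℝ, InDom b f →
      (∀ z, 0 ≤ schrodinger b c f z) → (∀ z, 0 ≤ f z) → f ≠ 0 →
      ∀ g ∈ R, C * shift g f y ≤ shift g f x := by
  -- edge version with constant independent of f
  have key2 : ∀ u v : X, 0 < b u v → ∃ C : ℝ, 0 < C ∧ ∀ f : X → ℝ, InDom b f →
      (∀ z, 0 ≤ schrodinger b c f z) → (∀ z, 0 ≤ f z) → f ≠ 0 → C * f v ≤ f u := by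
    intro u v huv
    have hedge : ∀ f : X → ℝ, InDom b f → (∀ z, 0 ≤ schrodinger b c f z) →
        (∀ z, 0 ≤ f z) → f ≠ 0 → b u v * f v ≤ deg b c u * f u := by
      intro f hf hsup hfpos hne
      have hS : Summable fun y => b u y * f y := summable_bf b hf hfpos u
      have h1 : b u v * f v ≤ ∑' y, b u y * f y :=
        Summable.le_tsum hS v fun y _ => mul_nonneg (hb0 u y) (hfpos y)
      exact h1.trans (key_ineq b c hbs hf hsup hfpos u)
    by_cases hd : 0 < deg b c u
    · refine ⟨b u v / deg b c u, div_pos huv hd, fun f hf hsup hfpos hne => ?_⟩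
      have := hedge f hf hsup hfpos hne
      rw [div_mul_eq_mul_div, div_le_iff₀ hd]
      linarith
    · refine ⟨1, one_pos, fun f hf hsup hfpos hne => ?_⟩
      exfalso
      apply hd
      have hposall := pos_of_superharmonic b c hb0 hbs hconn hf hsup hfpos hne
      have h1 := hedge f hf hsup hfpos hne
      have h2 : 0 < b u v * f v := mul_pos huv (hposall v)
      have h3 : 0 < deg b c u * f u := lt_of_lt_of_le h2 h1
      by_contra hdle
      push_neg at hdle
      nlinarith [hposall u]
  -- path version
  have main : ∀ x y : X, ∃ C : ℝ, 0 < C ∧ ∀ f : X → ℝ, InDom b f →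
      (∀ z, 0 ≤ schrodinger b c f z) → (∀ z, 0 ≤ f z) → f ≠ 0 → C * f y ≤ f x := by
    intro x y
    induction hconn x y with
    | refl => exact ⟨1, one_pos, fun f _ _ _ _ => by simp⟩
    | tail hpath e ih =>
      obtain ⟨C, hC, hCle⟩ := ih
      obtain ⟨C', hC', hC'le⟩ := key2 _ _ e
      refine ⟨C * C', mul_pos hC hC', fun f hf h1 h2 h3 => ?_⟩
      have ha := hCle f hf h1 h2 h3
      have hb := hC'le f hf h1 h2 h3
      calc C * C' * f _ = C * (C' * f _) := by ring
        _ ≤ C * f _ := mul_le_mul_of_nonneg_left hb hC.le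
        _ ≤ f x := ha
  intro x y
  obtain ⟨C, hC, hCle⟩ := main x y
  refine ⟨C, hC, fun f hf hsup hfpos hne g hg => ?_⟩
  obtain ⟨hdom, heq⟩ := hH g hg f hf
  refine hCle (shift g f) hdom ?_ (fun z => hfpos _) ?_
  · intro z
    rw [heq]
    exact hsup _
  · intro h0
    apply hne
    funext z
    have := congrFun h0 (g • z)
    simpa [shift, inv_smul_smul] using this

end GraphPaper
end
end

section
/- Let H be the Schrödinger operator associated to a connected graph (b,c) over X and fix x₀ ∈ X. Then the conic section 𝓢⁺₁ = {f ∈ 𝓢⁺ : f(x₀) = 1} is a compact subset of ℝ^X with respect to the product topology. -/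
open MeasureTheory
open scoped BigOperators

noncomputable section

namespace GraphPaper

variable {X : Type*}

variable {G : Type*} [Group G] [MulAction G X]

/-- Rewrite the Schrödinger operator on nonnegative functions in the domain. -/
lemma schrodinger_eq (b : X → X → ℝ) (c : X → ℝ) (hbs : ∀ x, Summable (b x))
    {f : X → ℝ} (hdom : InDom b f) (hpos : ∀ z, 0 ≤ f z) (x : X) :
    schrodinger b c f x = deg b c x * f x - ∑' y, b x y * f y := by
  have hsum1 : Summable (fun y => b x y * f x) := (hbs x).mul_right _
  have hsum2 : Summable (fun y => b x y * f y) :=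
    (hdom x).congr fun y => by rw [abs_of_nonneg (hpos y)]
  have heq : (∑' y, b x y * (f x - f y))
      = (∑' y, b x y) * f x - ∑' y, b x y * f y := by
    have : (fun y => b x y * (f x - f y)) = fun y => b x y * f x - b x y * f y := by
      funext y; ring
    rw [this, Summable.tsum_sub hsum1 hsum2, tsum_mul_right]
  rw [schrodinger, heq, deg]; ring

lemma key_estimate (b : X → X → ℝ) (c : X → ℝ) (hbs : ∀ x, Summable (b x))
    {f : X → ℝ} (hdom : InDom b f) (hsh : ∀ z, 0 ≤ schrodinger b c f z)
    (hpos : ∀ z, 0 ≤ f z) (x : X) :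
    ∑' y, b x y * f y ≤ deg b c x * f x := by
  have h := hsh x
  rw [schrodinger_eq b c hbs hdom hpos x] at h
  linarith

lemma edge_bound (b : X → X → ℝ) (c : X → ℝ) (hb0 : ∀ x y, 0 ≤ b x y)
    (hbs : ∀ x, Summable (b x))
    {f : X → ℝ} (hdom : InDom b f) (hsh : ∀ z, 0 ≤ schrodinger b c f z)
    (hpos : ∀ z, 0 ≤ f z) {x y : X} (hxy : 0 < b x y) :
    f y ≤ deg b c x * f x / b x y := by
  have hsum2 : Summable (fun y => b x y * f y) :=
    (hdom x).congr fun y => by rw [abs_of_nonneg (hpos y)]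
  have h1 : b x y * f y ≤ ∑' z, b x z * f z :=
    Summable.le_tsum hsum2 y fun z _ => mul_nonneg (hb0 x z) (hpos z)
  have h2 := key_estimate b c hbs hdom hsh hpos x
  rw [le_div_iff₀ hxy]
  nlinarith

/-- The conic section `𝓢⁺₁` is compact in the product topology. -/
theorem conic_section_compact {X : Type*} [Countable X]
    (b : X → X → ℝ) (c : X → ℝ)
    (hb0 : ∀ x y, 0 ≤ b x y) (hbd : ∀ x, b x x = 0) (hbs : ∀ x, Summable (b x))
    (hconn : Connected b) (x₀ : X) :
    IsCompact {f : X → ℝ | InDom b f ∧ (∀ z, 0 ≤ schrodinger b c f z) ∧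
      (∀ z, 0 ≤ f z) ∧ f ≠ 0 ∧ f x₀ = 1} := by
  set S := {f : X → ℝ | InDom b f ∧ (∀ z, 0 ≤ schrodinger b c f z) ∧
      (∀ z, 0 ≤ f z) ∧ f ≠ 0 ∧ f x₀ = 1} with hS
  -- pointwise bound
  have hbound : ∀ z : X, ∃ M : ℝ, 0 ≤ M ∧ ∀ f ∈ S, f z ≤ M := by
    intro z
    induction hconn x₀ z with
    | refl => exact ⟨1, zero_le_one, fun f hf => le_of_eq hf.2.2.2.2⟩
    | tail h hedge ih =>
      rename_i u v
      obtain ⟨M, hM0, hM⟩ := ih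
      refine ⟨max (deg b c u) 0 * M / b u v, by positivity, fun f hf => ?_⟩
      obtain ⟨hdom, hsh, hpos, _, _⟩ := hf
      have h1 := edge_bound b c hb0 hbs hdom hsh hpos hedge
      have h2 : deg b c u * f u ≤ max (deg b c u) 0 * M := by
        calc deg b c u * f u ≤ max (deg b c u) 0 * f u :=
              mul_le_mul_of_nonneg_right (le_max_left _ _) (hpos u)
          _ ≤ max (deg b c u) 0 * M :=
              mul_le_mul_of_nonneg_left (hM f ⟨hdom, hsh, hpos, ‹_›, ‹_›⟩) (le_max_right _ _)
      exact h1.trans (by gcongr)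
  -- closedness
  have hclosed : IsClosed S := by
    apply IsSeqClosed.isClosed
    intro fn f hfn hconv
    rw [tendsto_pi_nhds] at hconv
    have hpos : ∀ z, 0 ≤ f z := fun z =>
      ge_of_tendsto' (hconv z) fun n => (hfn n).2.2.1 z
    have hfx₀ : f x₀ = 1 := by
      have h1 : (fun n => fn n x₀) = fun _ : ℕ => (1 : ℝ) :=
        funext fun n => (hfn n).2.2.2.2
      exact tendsto_nhds_unique (hconv x₀) (h1 ▸ tendsto_const_nhds)
    -- finite-sum bound in the limit
    have hfin : ∀ (x : X) (F : Finset X), ∑ y ∈ F, b x y * f y ≤ deg b c x * f x := by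
      intro x F
      have ht1 : Filter.Tendsto (fun n => ∑ y ∈ F, b x y * fn n y) Filter.atTop
          (nhds (∑ y ∈ F, b x y * f y)) :=
        tendsto_finset_sum F fun y _ => (hconv y).const_mul _
      have ht2 : Filter.Tendsto (fun n => deg b c x * fn n x) Filter.atTop
          (nhds (deg b c x * f x)) := (hconv x).const_mul _
      refine le_of_tendsto_of_tendsto' ht1 ht2 fun n => ?_
      obtain ⟨hdom, hsh, hpn, _, _⟩ := hfn n
      have hsum2 : Summable (fun y => b x y * fn n y) :=
        (hdom x).congr fun y => by rw [abs_of_nonneg (hpn y)]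
      exact (Summable.sum_le_tsum F (fun y _ => mul_nonneg (hb0 x y) (hpn y)) hsum2).trans
        (key_estimate b c hbs hdom hsh hpn x)
    have hdomf : InDom b f := by
      intro x
      refine summable_of_sum_le (c := deg b c x * f x)
        (fun y => mul_nonneg (hb0 x y) (abs_nonneg _)) fun F => ?_
      calc ∑ y ∈ F, b x y * |f y| = ∑ y ∈ F, b x y * f y :=
            Finset.sum_congr rfl fun y _ => by rw [abs_of_nonneg (hpos y)]
        _ ≤ deg b c x * f x := hfin x F
    have hsumf : ∀ x, Summable (fun y => b x y * f y) := fun x =>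
      (hdomf x).congr fun y => by rw [abs_of_nonneg (hpos y)]
    have hshf : ∀ z, 0 ≤ schrodinger b c f z := by
      intro z
      rw [schrodinger_eq b c hbs hdomf hpos z, sub_nonneg]
      exact Summable.tsum_le_of_sum_le (hsumf z) (hfin z)
    exact ⟨hdomf, hshf, hpos, fun h => by simp [h] at hfx₀, hfx₀⟩
  -- containment in a compact box
  choose M hM0 hM using hbound
  have hsub : S ⊆ Set.pi Set.univ (fun z => Set.Icc 0 (M z)) :=
    fun f hf z _ => ⟨hf.2.2.1 z, hM z f hf⟩
  exact IsCompact.of_isClosed_subset (isCompact_univ_pi fun z => isCompact_Icc) hclosed hsub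

end GraphPaper
end
end

section
/- Let (b,c) be a connected graph over X with a group action G such that H = H_{b,c} is G-invariant, fix x₀ ∈ X, and let R ⊆ G be a subgroup. Let f ∈ 𝓚^R be harmonic and let μ be a Borel probability measure on the set of extreme points ex 𝓚^R such that f(x) = ∫_{ex 𝓚^R} k(x) dμ(k) for all x ∈ X. Then the set {k ∈ ex 𝓚^R : Hk ≠ 0} is a μ-null set. -/
open MeasureTheory
open scoped BigOperators

noncomputable section

namespace GraphPaper

variable {X : Type*}

variable {G : Type*} [Group G] [MulAction G X]

section Aux

variable {X : Type*}

/-- Auxiliary closed set containing `Kset`. -/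
def good (b : X → X → ℝ) (c : X → ℝ) (x₀ : X) : Set (X → ℝ) :=
  {h | (∀ z, 0 ≤ h z) ∧ h x₀ = 1 ∧
    ∀ x : X, ∀ F : Finset X, ∑ y ∈ F, b x y * h y ≤ deg b c x * h x}

lemma good_isClosed (b : X → X → ℝ) (c : X → ℝ) (x₀ : X) : IsClosed (good b c x₀) := by
  have h1 : IsClosed {h : X → ℝ | ∀ z, 0 ≤ h z} := by
    rw [Set.setOf_forall]
    exact isClosed_iInter fun z => isClosed_le continuous_const (continuous_apply z)
  have h2 : IsClosed {h : X → ℝ | h x₀ = 1} :=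
    isClosed_eq (continuous_apply x₀) continuous_const
  have h3 : IsClosed {h : X → ℝ |
      ∀ x : X, ∀ F : Finset X, ∑ y ∈ F, b x y * h y ≤ deg b c x * h x} := by
    rw [Set.setOf_forall]
    refine isClosed_iInter fun x => ?_
    rw [Set.setOf_forall]
    refine isClosed_iInter fun F => ?_
    exact isClosed_le (continuous_finset_sum F fun y _ => continuous_const.mul (continuous_apply y))
      (continuous_const.mul (continuous_apply x))
  exact h1.inter (h2.inter h3)

/-- For a nonnegative harmonic function in the domain, `∑' y, b x y * h y = deg x * h x`. -/
lemma harmonic_tsum (b : X → X → ℝ) (c : X → ℝ) (hbs : ∀ x, Summable (b x))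
    (h : X → ℝ) (hdom : InDom b h) (hpos : ∀ z, 0 ≤ h z)
    (hharm : schrodinger b c h = 0) (x : X) :
    ∑' y, b x y * h y = deg b c x * h x := by
  have hs : Summable (fun y => b x y * h y) := by
    refine (hdom x).congr fun y => ?_
    rw [abs_of_nonneg (hpos y)]
  have hs2 : Summable (fun y => b x y * h x) := (hbs x).mul_right _
  have h0 : (∑' y, b x y * (h x - h y)) + c x * h x = 0 := congrFun hharm x
  have hsplit : (∑' y, b x y * (h x - h y))
      = (∑' y, b x y) * h x - ∑' y, b x y * h y := by
    have heq : ∀ y, b x y * (h x - h y) = b x y * h x - b x y * h y := fun y => by ring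
    rw [tsum_congr heq, Summable.tsum_sub hs2 hs, tsum_mul_right]
  rw [hsplit] at h0
  simp only [deg]
  linarith

lemma Kset_subset_good (b : X → X → ℝ) (c : X → ℝ) (x₀ : X)
    (hb0 : ∀ x y, 0 ≤ b x y) (hbs : ∀ x, Summable (b x)) :
    Kset b c x₀ ⊆ good b c x₀ := by
  rw [Kset]
  refine closure_minimal ?_ (good_isClosed b c x₀)
  rintro h ⟨⟨hdom, hharm, hpos, -⟩, hnorm⟩
  refine ⟨hpos, hnorm, fun x F => ?_⟩
  have hs : Summable (fun y => b x y * h y) := by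
    refine (hdom x).congr fun y => ?_
    rw [abs_of_nonneg (hpos y)]
  calc ∑ y ∈ F, b x y * h y ≤ ∑' y, b x y * h y :=
        Summable.sum_le_tsum F (fun y _ => mul_nonneg (hb0 x y) (hpos y)) hs
    _ = deg b c x * h x := harmonic_tsum b c hbs h hdom hpos hharm x

lemma good_summable (b : X → X → ℝ) (c : X → ℝ) (x₀ : X)
    (hb0 : ∀ x y, 0 ≤ b x y) {h : X → ℝ} (hh : h ∈ good b c x₀) (x : X) :
    Summable (fun y => b x y * h y) ∧ ∑' y, b x y * h y ≤ deg b c x * h x := by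
  obtain ⟨hpos, -, hF⟩ := hh
  have hs : Summable (fun y => b x y * h y) :=
    summable_of_sum_le (fun y => mul_nonneg (hb0 x y) (hpos y)) (hF x)
  exact ⟨hs, Summable.tsum_le_of_sum_le hs (hF x)⟩

lemma good_bound (b : X → X → ℝ) (c : X → ℝ) (x₀ : X)
    (hconn : Connected b) (z : X) :
    ∃ C : ℝ, 0 ≤ C ∧ ∀ h ∈ good b c x₀, h z ≤ C := by
  have hpath : Relation.ReflTransGen (fun u v => 0 < b u v) x₀ z := hconn x₀ z
  induction hpath with
  | refl => exact ⟨1, zero_le_one, fun h hh => le_of_eq hh.2.1⟩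
  | tail hp hbuv ih =>
    rename_i u v
    obtain ⟨C, hC0, hC⟩ := ih
    refine ⟨|deg b c u| * C / b u v, by positivity, fun h hh => ?_⟩
    have h1 : b u v * h v ≤ deg b c u * h u := by
      have := hh.2.2 u {v}
      simpa using this
    have h2 : deg b c u * h u ≤ |deg b c u| * C := by
      calc deg b c u * h u ≤ |deg b c u| * h u :=
            mul_le_mul_of_nonneg_right (le_abs_self _) (hh.1 u)
        _ ≤ |deg b c u| * C :=
            mul_le_mul_of_nonneg_left (hC h hh) (abs_nonneg _)
    rw [le_div_iff₀ hbuv]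
    nlinarith [h1, h2]

end Aux

/-- A Choquet representing measure of a harmonic element of `𝓚^R`
is concentrated on the harmonic extreme points. -/
theorem representing_measure_concentrated_on_harmonic {X : Type*} [Countable X]
    {G : Type*} [Group G] [MulAction G X]
    (b : X → X → ℝ) (c : X → ℝ)
    (hb0 : ∀ x y, 0 ≤ b x y) (hbd : ∀ x, b x x = 0) (hbs : ∀ x, Summable (b x))
    (hconn : Connected b) (x₀ : X) (hH : HInvOn b c (Set.univ : Set G))
    (R : Subgroup G)
    (f : X → ℝ) (hf : f ∈ KsetR b c x₀ (R : Set G))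
    (hdom : InDom b f) (hharm : schrodinger b c f = 0)
    (μ : Measure (X → ℝ)) [IsProbabilityMeasure μ]
    (hconc : μ (Set.extremePoints ℝ (KsetR b c x₀ (R : Set G)))ᶜ = 0)
    (hrep : ∀ x : X, f x = ∫ k, k x ∂μ) :
    μ {k | k ∈ Set.extremePoints ℝ (KsetR b c x₀ (R : Set G)) ∧
        ¬ (InDom b k ∧ schrodinger b c k = 0)} = 0 := by
  classical
  have hKg : Kset b c x₀ ⊆ good b c x₀ := Kset_subset_good b c x₀ hb0 hbs
  have hfg : f ∈ good b c x₀ := hKg hf.1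
  have haeE : ∀ᵐ k ∂μ, k ∈ Set.extremePoints ℝ (KsetR b c x₀ (R : Set G)) := by
    rw [MeasureTheory.ae_iff]; exact hconc
  have haeG : ∀ᵐ k ∂μ, k ∈ good b c x₀ :=
    haeE.mono fun k hk => hKg (extremePoints_subset hk).1
  have hmeas_eval : ∀ z : X, Measurable fun k : X → ℝ => k z := measurable_pi_apply
  have hint : ∀ z : X, Integrable (fun k : X → ℝ => k z) μ := by
    intro z
    obtain ⟨C, hC0, hC⟩ := good_bound b c x₀ hconn z
    refine Integrable.mono' (integrable_const C) (hmeas_eval z).aestronglyMeasurable ?_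
    filter_upwards [haeG] with k hk
    rw [Real.norm_eq_abs, abs_of_nonneg (hk.1 z)]
    exact hC k hk
  have hsf : ∀ x, Summable (fun y => b x y * f y) := fun x => (good_summable b c x₀ hb0 hfg x).1
  have hf_tsum : ∀ x, ∑' y, b x y * f y = deg b c x * f x :=
    harmonic_tsum b c hbs f hdom hfg.1 hharm
  -- key pointwise a.e. identity
  have key : ∀ x : X, ∀ᵐ k ∂μ, k ∈ good b c x₀ → deg b c x * k x = ∑' y, b x y * k y := by
    intro x
    have hφmeas : Measurable (fun k : X → ℝ => ∑' y, ENNReal.ofReal (b x y * k y)) :=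
      Measurable.ennreal_tsum fun y =>
        ENNReal.measurable_ofReal.comp ((hmeas_eval y).const_mul _)
    have hψmeas : Measurable (fun k : X → ℝ => ENNReal.ofReal (deg b c x * k x)) :=
      ENNReal.measurable_ofReal.comp ((hmeas_eval x).const_mul _)
    have h1 : ∀ y, (∫⁻ k, ENNReal.ofReal (b x y * k y) ∂μ) = ENNReal.ofReal (b x y * f y) := by
      intro y
      rw [← MeasureTheory.ofReal_integral_eq_lintegral_ofReal ((hint y).const_mul _)
        (by filter_upwards [haeG] with k hk; exact mul_nonneg (hb0 x y) (hk.1 y))]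
      rw [integral_const_mul, ← hrep y]
    have hφint : ∫⁻ k, (∑' y, ENNReal.ofReal (b x y * k y)) ∂μ
        = ENNReal.ofReal (deg b c x * f x) := by
      calc ∫⁻ k, (∑' y, ENNReal.ofReal (b x y * k y)) ∂μ
          = ∑' y, ∫⁻ k, ENNReal.ofReal (b x y * k y) ∂μ :=
            MeasureTheory.lintegral_tsum fun y =>
              (ENNReal.measurable_ofReal.comp ((hmeas_eval y).const_mul _)).aemeasurable
        _ = ∑' y, ENNReal.ofReal (b x y * f y) := tsum_congr h1
        _ = ENNReal.ofReal (∑' y, b x y * f y) :=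
            (ENNReal.ofReal_tsum_of_nonneg (fun y => mul_nonneg (hb0 x y) (hfg.1 y)) (hsf x)).symm
        _ = ENNReal.ofReal (deg b c x * f x) := by rw [hf_tsum x]
    have hψint : ∫⁻ k, ENNReal.ofReal (deg b c x * k x) ∂μ
        = ENNReal.ofReal (deg b c x * f x) := by
      rw [← MeasureTheory.ofReal_integral_eq_lintegral_ofReal ((hint x).const_mul _)
        (by
          filter_upwards [haeG] with k hk
          have h0 := (good_summable b c x₀ hb0 hk x).2
          have h1 : (0:ℝ) ≤ ∑' y, b x y * k y :=
            tsum_nonneg fun y => mul_nonneg (hb0 x y) (hk.1 y)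
          exact le_trans h1 h0)]
      rw [integral_const_mul, ← hrep x]
    have hle : (fun k : X → ℝ => ∑' y, ENNReal.ofReal (b x y * k y))
        ≤ᵐ[μ] (fun k : X → ℝ => ENNReal.ofReal (deg b c x * k x)) := by
      filter_upwards [haeG] with k hk
      obtain ⟨hs, hineq⟩ := good_summable b c x₀ hb0 hk x
      calc (∑' y, ENNReal.ofReal (b x y * k y)) = ENNReal.ofReal (∑' y, b x y * k y) :=
            (ENNReal.ofReal_tsum_of_nonneg (fun y => mul_nonneg (hb0 x y) (hk.1 y)) hs).symm
        _ ≤ ENNReal.ofReal (deg b c x * k x) := ENNReal.ofReal_le_ofReal hineq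
    have hzero : ∫⁻ k, (ENNReal.ofReal (deg b c x * k x)
        - ∑' y, ENNReal.ofReal (b x y * k y)) ∂μ = 0 := by
      rw [MeasureTheory.lintegral_sub hφmeas
        (by rw [hφint]; exact ENNReal.ofReal_ne_top) hle, hψint, hφint, tsub_self]
    have hae0 : ∀ᵐ k ∂μ, ENNReal.ofReal (deg b c x * k x)
        - (∑' y, ENNReal.ofReal (b x y * k y)) = 0 := by
      have h := (MeasureTheory.lintegral_eq_zero_iff (hψmeas.sub hφmeas)).mp hzero
      filter_upwards [h] with k hk using hk
    filter_upwards [hae0, haeG] with k hk hkg _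
    obtain ⟨hs, hineq⟩ := good_summable b c x₀ hb0 hkg x
    have hφk : (∑' y, ENNReal.ofReal (b x y * k y)) = ENNReal.ofReal (∑' y, b x y * k y) :=
      (ENNReal.ofReal_tsum_of_nonneg (fun y => mul_nonneg (hb0 x y) (hkg.1 y)) hs).symm
    have hψle : ENNReal.ofReal (deg b c x * k x) ≤ ∑' y, ENNReal.ofReal (b x y * k y) :=
      tsub_eq_zero_iff_le.mp hk
    have hφle : (∑' y, ENNReal.ofReal (b x y * k y)) ≤ ENNReal.ofReal (deg b c x * k x) := by
      rw [hφk]; exact ENNReal.ofReal_le_ofReal hineq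
    have heq : ENNReal.ofReal (deg b c x * k x) = ENNReal.ofReal (∑' y, b x y * k y) := by
      rw [← hφk]; exact le_antisymm hψle hφle
    have h1 : (0:ℝ) ≤ ∑' y, b x y * k y := tsum_nonneg fun y => mul_nonneg (hb0 x y) (hkg.1 y)
    exact (ENNReal.ofReal_eq_ofReal_iff (le_trans h1 hineq) h1).mp heq
  have hall : ∀ᵐ k ∂μ, ∀ x : X, k ∈ good b c x₀ → deg b c x * k x = ∑' y, b x y * k y :=
    (MeasureTheory.ae_all_iff).mpr key
  have hQ : ∀ᵐ k ∂μ, InDom b k ∧ schrodinger b c k = 0 := by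
    filter_upwards [haeG, hall] with k hkg hkx
    constructor
    · intro x
      exact ((good_summable b c x₀ hb0 hkg x).1).congr fun y => by
        rw [abs_of_nonneg (hkg.1 y)]
    · funext x
      show (∑' y, b x y * (k x - k y)) + c x * k x = 0
      have hs := (good_summable b c x₀ hb0 hkg x).1
      have hs2 : Summable (fun y => b x y * k x) := (hbs x).mul_right _
      have hsplit : (∑' y, b x y * (k x - k y))
          = (∑' y, b x y) * k x - ∑' y, b x y * k y := by
        have heq : ∀ y, b x y * (k x - k y) = b x y * k x - b x y * k y := fun y => by ring
        rw [tsum_congr heq, Summable.tsum_sub hs2 hs, tsum_mul_right]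
      have hx := hkx x hkg
      simp only [deg] at hx
      rw [hsplit]
      linarith
  refine measure_mono_null (fun k hk => hk.2) (MeasureTheory.ae_iff.mp hQ)


end GraphPaper
end
end

section
/- Let (b,c) be a connected graph over X with a cocompact group action G such that H = H_{b,c} is G-invariant, fix x₀ ∈ X, and let R ⊆ G be a normal subgroup. Then every harmonic extreme point k of 𝓚^R is Q(R)-multiplicative, with character γ_k(q) = k(q·x₀) for q ∈ Q(R). -/
open MeasureTheory
open scoped BigOperators

noncomputable section

namespace GraphPaper

variable {X : Type*}

variable {G : Type*} [Group G] [MulAction G X]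

section Aux

variable {X : Type*} {G : Type*} [Group G] [MulAction G X]
variable {b : X → X → ℝ} {c : X → ℝ}

lemma summable_mul_of_inDom (hb0 : ∀ x y, 0 ≤ b x y) {f : X → ℝ} (hf : InDom b f) (x : X) :
    Summable fun y => b x y * f y := by
  refine summable_abs_iff.mp ((hf x).congr fun y => ?_)
  rw [abs_mul, abs_of_nonneg (hb0 x y)]

lemma inDom_smul {f : X → ℝ} (hf : InDom b f) (a : ℝ) : InDom b (a • f) := by
  intro x
  refine ((hf x).mul_left |a|).congr fun y => ?_
  simp only [Pi.smul_apply, smul_eq_mul, abs_mul]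
  ring

lemma inDom_sub (hb0 : ∀ x y, 0 ≤ b x y) {f g : X → ℝ} (hf : InDom b f) (hg : InDom b g) :
    InDom b (f - g) := by
  intro x
  refine Summable.of_nonneg_of_le (fun y => mul_nonneg (hb0 x y) (abs_nonneg _))
    (fun y => ?_) ((hf x).add (hg x))
  have htri : |f y - g y| ≤ |f y| + |g y| := by
    simpa [sub_eq_add_neg, abs_neg] using abs_add_le (f y) (-(g y))
  calc b x y * |(f - g) y| ≤ b x y * (|f y| + |g y|) := by
        exact mul_le_mul_of_nonneg_left (by simpa [Pi.sub_apply] using htri) (hb0 x y)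
    _ = b x y * |f y| + b x y * |g y| := by ring

lemma schrodinger_apply (hb0 : ∀ x y, 0 ≤ b x y) (hbs : ∀ x, Summable (b x))
    {f : X → ℝ} (hf : InDom b f) (x : X) :
    schrodinger b c f x = deg b c x * f x - ∑' y, b x y * f y := by
  have h1 : Summable fun y => b x y * f x := (hbs x).mul_right (f x)
  have h2 := summable_mul_of_inDom hb0 hf x
  unfold schrodinger deg
  have he : (fun y => b x y * (f x - f y)) = fun y => b x y * f x - b x y * f y := by
    funext y; ring
  rw [he, Summable.tsum_sub h1 h2, tsum_mul_right]
  ring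

lemma schrodinger_smul (a : ℝ) (f : X → ℝ) :
    schrodinger b c (a • f) = a • schrodinger b c f := by
  funext x
  unfold schrodinger
  simp only [Pi.smul_apply, smul_eq_mul]
  have he : (fun y => b x y * (a * f x - a * f y)) = fun y => a * (b x y * (f x - f y)) := by
    funext y; ring
  rw [he, tsum_mul_left]
  ring

lemma schrodinger_sub (hb0 : ∀ x y, 0 ≤ b x y) (hbs : ∀ x, Summable (b x))
    {f g : X → ℝ} (hf : InDom b f) (hg : InDom b g) :
    schrodinger b c (f - g) = schrodinger b c f - schrodinger b c g := by
  funext x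
  rw [Pi.sub_apply, schrodinger_apply hb0 hbs hf x, schrodinger_apply hb0 hbs hg x,
    schrodinger_apply hb0 hbs (inDom_sub hb0 hf hg) x]
  have he : (fun y => b x y * (f - g) y) = fun y => b x y * f y - b x y * g y := by
    funext y; simp only [Pi.sub_apply]; ring
  rw [he, Summable.tsum_sub (summable_mul_of_inDom hb0 hf x) (summable_mul_of_inDom hb0 hg x),
    Pi.sub_apply]
  ring

lemma tsum_eq_deg (hb0 : ∀ x y, 0 ≤ b x y) (hbs : ∀ x, Summable (b x))
    {f : X → ℝ} (hf : InDom b f) (hh : schrodinger b c f = 0) (x : X) :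
    ∑' y, b x y * f y = deg b c x * f x := by
  have h0 : schrodinger b c f x = 0 := by rw [hh]; rfl
  rw [schrodinger_apply hb0 hbs hf x] at h0
  linarith

lemma harnack_path (hb0 : ∀ x y, 0 ≤ b x y) (hbs : ∀ x, Summable (b x)) {v w : X}
    (hvw : Relation.ReflTransGen (fun u v => 0 < b u v) v w) :
    ∃ C : ℝ, 0 ≤ C ∧ ∀ f : X → ℝ, InDom b f → schrodinger b c f = 0 →
      (∀ x, 0 ≤ f x) → f w ≤ C * f v := by
  induction hvw with
  | refl => exact ⟨1, zero_le_one, fun f _ _ _ => by rw [one_mul]⟩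
  | @tail m w hvm hmw ih =>
    obtain ⟨C, hC0, hC⟩ := ih
    refine ⟨max (deg b c m) 0 * C / b m w,
      div_nonneg (mul_nonneg (le_max_right _ _) hC0) hmw.le, fun f hdom hharm hpos => ?_⟩
    have key : b m w * f w ≤ deg b c m * f m := by
      rw [← tsum_eq_deg hb0 hbs hdom hharm m]
      exact Summable.le_tsum (summable_mul_of_inDom hb0 hdom m) w
        (fun z _ => mul_nonneg (hb0 m z) (hpos z))
    have h2 : deg b c m * f m ≤ max (deg b c m) 0 * f m :=
      mul_le_mul_of_nonneg_right (le_max_left _ _) (hpos m)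
    have h4 : max (deg b c m) 0 * f m ≤ max (deg b c m) 0 * (C * f v) :=
      mul_le_mul_of_nonneg_left (hC f hdom hharm hpos) (le_max_right _ _)
    rw [div_mul_eq_mul_div, le_div_iff₀ hmw]
    nlinarith

lemma shift_shift (g h : G) (f : X → ℝ) : shift g (shift h f) = shift (g * h) f := by
  funext x
  simp [shift, mul_inv_rev, mul_smul]

end Aux

/-- Every harmonic extreme point `k` of `𝓚^R` is `Q(R)`-multiplicative
with character `γ_k(q) = k(q • x₀)`. -/
theorem extremePoint_Qsub_multiplicative {X : Type*} [Countable X] {G : Type*} [Group G]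
    [MulAction G X] (b : X → X → ℝ) (c : X → ℝ)
    (hb0 : ∀ x y, 0 ≤ b x y) (hbd : ∀ x, b x x = 0) (hbs : ∀ x, Summable (b x))
    (hconn : Connected b) (hcocpt : CocompactAction G X)
    (hH : HInvOn b c (Set.univ : Set G)) (x₀ : X)
    (R : Subgroup G) [R.Normal]
    (k : X → ℝ) (hk : k ∈ Set.extremePoints ℝ (KsetR b c x₀ (R : Set G)))
    (hdom : InDom b k) (hharm : schrodinger b c k = 0) :
    (∀ q ∈ Qsub R, 0 < k (q • x₀)) ∧
    (∀ q ∈ Qsub R, ∀ p ∈ Qsub R, k ((q * p) • x₀) = k (q • x₀) * k (p • x₀)) ∧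
    (∀ q ∈ Qsub R, shift q k = fun x => k (q⁻¹ • x₀) * k x) := by
  classical
  obtain ⟨hkK, hkinv⟩ := hk.1
  -- basic facts: k x₀ = 1 and k ≥ 0, from membership in the closure
  have hsubset : {f : X → ℝ | f ∈ Hplus b c ∧ f x₀ = 1} ⊆
      {f : X → ℝ | f x₀ = 1 ∧ ∀ x, 0 ≤ f x} := fun f hf => ⟨hf.2, hf.1.2.2.1⟩
  have hcl : IsClosed {f : X → ℝ | f x₀ = 1 ∧ ∀ x, 0 ≤ f x} := by
    have h1 : IsClosed {f : X → ℝ | f x₀ = 1} :=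
      isClosed_eq (continuous_apply x₀) continuous_const
    have h2 : IsClosed {f : X → ℝ | ∀ x, 0 ≤ f x} := by
      rw [Set.setOf_forall]
      exact isClosed_iInter fun x => isClosed_le continuous_const (continuous_apply x)
    exact h1.inter h2
  have hk01 := closure_minimal hsubset hcl hkK
  have hx₀1 : k x₀ = 1 := hk01.1
  have hkpos0 : ∀ x, 0 ≤ k x := hk01.2
  -- strict positivity of k everywhere
  have hkpos : ∀ x, 0 < k x := by
    intro x
    obtain ⟨C, hC0, hC⟩ := harnack_path hb0 hbs (hconn x x₀)
    have h1 := hC k hdom hharm hkpos0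
    rw [hx₀1] at h1
    rcases (hkpos0 x).lt_or_eq with h | h
    · exact h
    · exfalso; rw [← h] at h1; nlinarith
  -- shifts of k are nonnegative harmonic functions in the domain
  have hshift : ∀ g : G, InDom b (shift g k) ∧ schrodinger b c (shift g k) = 0 := by
    intro g
    obtain ⟨h1, h2⟩ := hH g (Set.mem_univ g) k hdom
    refine ⟨h1, ?_⟩
    rw [h2, hharm]
    rfl
  -- R-invariance of any shift of k
  have hRinv : ∀ q : G, ∀ g ∈ (R : Set G), shift g (shift q k) = shift q k := by
    intro q g hg
    have hmem : q⁻¹ * g * q ∈ (R : Set G) := by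
      simpa using ‹R.Normal›.conj_mem g hg q⁻¹
    rw [shift_shift, show g * q = q * (q⁻¹ * g * q) by group, ← shift_shift,
      hkinv (q⁻¹ * g * q) hmem]
  -- the key multiplicativity statement
  have key : ∀ q ∈ Qsub R, shift q k = fun x => k (q⁻¹ • x₀) * k x := by
    intro q hq
    set a : ℝ := k (q⁻¹ • x₀) with ha
    have ha0 : 0 < a := hkpos _
    have hqc : ∀ z : G ⧸ R, z * (QuotientGroup.mk' R) q = (QuotientGroup.mk' R) q * z :=
      Subgroup.mem_center_iff.mp (Subgroup.mem_comap.mp hq)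
    have hcomm : ∀ g : G, q⁻¹ * g * q * g⁻¹ ∈ R := by
      intro g
      have h1 := hqc ((QuotientGroup.mk' R) g)
      rw [← QuotientGroup.ker_mk' R, MonoidHom.mem_ker]
      rw [map_mul, map_mul, map_mul, map_inv, map_inv]
      calc ((QuotientGroup.mk' R) q)⁻¹ * (QuotientGroup.mk' R) g * (QuotientGroup.mk' R) q *
            ((QuotientGroup.mk' R) g)⁻¹
          = ((QuotientGroup.mk' R) q)⁻¹ * ((QuotientGroup.mk' R) g * (QuotientGroup.mk' R) q) *
            ((QuotientGroup.mk' R) g)⁻¹ := by group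
        _ = ((QuotientGroup.mk' R) q)⁻¹ * ((QuotientGroup.mk' R) q * (QuotientGroup.mk' R) g) *
            ((QuotientGroup.mk' R) g)⁻¹ := by rw [h1]
        _ = 1 := by group
    have hswap : ∀ (g : G) (z : X), k ((q⁻¹ * g) • z) = k ((g * q⁻¹) • z) := by
      intro g z
      have hr : q⁻¹ * g * q * g⁻¹ ∈ (R : Set G) := hcomm g
      have h2 := congrFun (hkinv _ hr) ((q⁻¹ * g) • z)
      simp only [shift] at h2
      have e : (q⁻¹ * g * q * g⁻¹)⁻¹ • (q⁻¹ * g) • z = (g * q⁻¹) • z := by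
        rw [← mul_smul]; congr 1; group
      rw [e] at h2
      exact h2.symm
    -- uniform Harnack bound : k (q⁻¹ • x) ≤ C * k x
    obtain ⟨V, hV⟩ := hcocpt
    have hCv : ∀ v : X, ∃ C : ℝ, 0 ≤ C ∧ ∀ f : X → ℝ, InDom b f → schrodinger b c f = 0 →
        (∀ x, 0 ≤ f x) → f (q⁻¹ • v) ≤ C * f v :=
      fun v => harnack_path hb0 hbs (hconn v (q⁻¹ • v))
    choose Cv hCv0 hCvf using hCv
    set C : ℝ := ∑ v ∈ V, Cv v with hCdef
    have hC0 : 0 ≤ C := Finset.sum_nonneg fun v _ => hCv0 v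
    have hbound : ∀ x : X, k (q⁻¹ • x) ≤ C * k x := by
      intro x
      obtain ⟨g, v, hv, rfl⟩ := hV x
      have h1 := hCvf v (shift g⁻¹ k) (hshift g⁻¹).1 (hshift g⁻¹).2 (fun y => hkpos0 _)
      simp only [shift, inv_inv] at h1
      have e1 : k (q⁻¹ • g • v) = k (g • q⁻¹ • v) := by
        rw [← mul_smul, ← mul_smul]; exact hswap g v
      have h3 : Cv v * k (g • v) ≤ C * k (g • v) :=
        mul_le_mul_of_nonneg_right (Finset.single_le_sum (fun i _ => hCv0 i) hv) (hkpos0 _)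
      rw [e1]
      linarith
    -- the normalized shifted function h
    set h : X → ℝ := a⁻¹ • shift q k with hhdef
    have hhdom : InDom b h := inDom_smul (hshift q).1 a⁻¹
    have hhharm : schrodinger b c h = 0 := by
      rw [hhdef, schrodinger_smul, (hshift q).2, smul_zero]
    have hhpos : ∀ x, 0 ≤ h x := fun x =>
      mul_nonneg (inv_nonneg.mpr ha0.le) (hkpos0 _)
    have hhx₀ : h x₀ = 1 := by
      show a⁻¹ * k (q⁻¹ • x₀) = 1
      rw [← ha]
      exact inv_mul_cancel₀ ha0.ne'
    have hhinv : ∀ g ∈ (R : Set G), shift g h = h := by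
      intro g hg
      have : shift g h = a⁻¹ • shift g (shift q k) := by
        funext x; simp [shift, hhdef]
      rw [this, hRinv q g hg]
    have hhK : h ∈ KsetR b c x₀ (R : Set G) := by
      refine ⟨subset_closure ⟨⟨hhdom, hhharm, hhpos, ?_⟩, hhx₀⟩, hhinv⟩
      intro h0
      rw [h0] at hhx₀
      simpa using hhx₀
    -- choose ε
    set ε : ℝ := min (1/2) (a / (2 * (C + 1))) with hεdef
    have hε0 : 0 < ε := lt_min (by norm_num) (by positivity)
    have hε1 : ε < 1 := lt_of_le_of_lt (min_le_left _ _) (by norm_num)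
    have h1ε : 0 < 1 - ε := by linarith
    have hεC : ε * a⁻¹ * C ≤ 1 := by
      have h1 : ε ≤ a / (2 * (C + 1)) := min_le_right _ _
      have h2 : (0:ℝ) < 2 * (C + 1) := by linarith
      calc ε * a⁻¹ * C ≤ (a / (2 * (C + 1))) * a⁻¹ * C := by
            exact mul_le_mul_of_nonneg_right
              (mul_le_mul_of_nonneg_right h1 (inv_nonneg.mpr ha0.le)) hC0
        _ = C / (2 * (C + 1)) := by field_simp
        _ ≤ 1 := by rw [div_le_one h2]; linarith
    have hεh : ∀ x, ε * h x ≤ k x := by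
      intro x
      calc ε * h x = (ε * a⁻¹) * k (q⁻¹ • x) := by
            show ε * (a⁻¹ * k (q⁻¹ • x)) = _
            ring
        _ ≤ (ε * a⁻¹) * (C * k x) :=
            mul_le_mul_of_nonneg_left (hbound x)
              (mul_nonneg hε0.le (inv_nonneg.mpr ha0.le))
        _ = (ε * a⁻¹ * C) * k x := by ring
        _ ≤ 1 * k x := mul_le_mul_of_nonneg_right hεC (hkpos0 x)
        _ = k x := one_mul _
    -- the complementary function w
    set w : X → ℝ := (1 - ε)⁻¹ • (k - ε • h) with hwdef
    have hwdom : InDom b w := inDom_smul (inDom_sub hb0 hdom (inDom_smul hhdom ε)) _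
    have hwharm : schrodinger b c w = 0 := by
      rw [hwdef, schrodinger_smul, schrodinger_sub hb0 hbs hdom (inDom_smul hhdom ε),
        schrodinger_smul, hharm, hhharm]
      simp
    have hwapp : ∀ x, w x = (1 - ε)⁻¹ * (k x - ε * h x) := fun x => rfl
    have hwpos : ∀ x, 0 ≤ w x := by
      intro x
      rw [hwapp x]
      exact mul_nonneg (inv_nonneg.mpr h1ε.le) (by linarith [hεh x])
    have hwx₀ : w x₀ = 1 := by
      rw [hwapp x₀, hx₀1, hhx₀]
      field_simp
    have hwinv : ∀ g ∈ (R : Set G), shift g w = w := by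
      intro g hg
      funext x
      have e1 : k (g⁻¹ • x) = k x := congrFun (hkinv g hg) x
      have e2 : h (g⁻¹ • x) = h x := congrFun (hhinv g hg) x
      show (1 - ε)⁻¹ * (k (g⁻¹ • x) - ε * h (g⁻¹ • x)) = (1 - ε)⁻¹ * (k x - ε * h x)
      rw [e1, e2]
    have hwK : w ∈ KsetR b c x₀ (R : Set G) := by
      refine ⟨subset_closure ⟨⟨hwdom, hwharm, hwpos, ?_⟩, hwx₀⟩, hwinv⟩
      intro h0
      rw [h0] at hwx₀
      simpa using hwx₀
    -- k lies in the open segment between h and w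
    have hseg : k ∈ openSegment ℝ h w := by
      refine ⟨ε, 1 - ε, hε0, h1ε, by ring, ?_⟩
      funext x
      show ε * h x + (1 - ε) * ((1 - ε)⁻¹ * (k x - ε * h x)) = k x
      rw [← mul_assoc, mul_inv_cancel₀ h1ε.ne', one_mul]
      ring
    have hhk := hk.2 hhK hwK hseg
    -- conclude
    funext x
    have hx : a⁻¹ * shift q k x = k x := congrFun hhk x
    show shift q k x = a * k x
    rw [← hx]
    field_simp
  refine ⟨fun q _ => hkpos _, ?_, key⟩
  intro q hq p hp
  have h3 := key q⁻¹ (inv_mem hq)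
  have h4 := congrFun h3 (p • x₀)
  simp only [shift, inv_inv] at h4
  rw [mul_smul]
  exact h4


end GraphPaper
end
end
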